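/- Let F : T → S be a triangulated functor between triangulated categories closed under small coproducts. Assume F admits a conservative right adjoint G that preserves small coproducts. If T is compactly generated by a set of objects T₀, then S is compactly generated by the set {F(t) : t ∈ T₀}. -/

import Mathlib

open CategoryTheory Limits Pretriangulated

universe v₁ v₂ u₁ u₂

/-- An object `X` of a preadditive category is compact if `Hom(X, -)`
(as an `AddCommGrp`-valued functor) preserves small coproducts. -/
def IsCompactObject {C : Type u₁} [Category.{v₁} C] [Preadditive C] (X : C) : Prop :=
  ∀ J : Type, Nonempty (PreservesColimitsOfShape (Discrete J)
    (preadditiveCoyoneda.obj (Opposite.op X)))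

/-- A set of objects `T₀` compactly generates a (pre)triangulated category `C` if every
object of `T₀` is compact and an object `s` is zero as soon as every morphism
`t⟦n⟧ ⟶ s` with `t ∈ T₀`, `n : ℤ` vanishes. -/
def IsCompactlyGeneratedBy {C : Type u₁} [Category.{v₁} C] [Preadditive C] [HasShift C ℤ]
    (T₀ : Set C) : Prop :=
  (∀ t ∈ T₀, IsCompactObject t) ∧
    ∀ s : C, (∀ t ∈ T₀, ∀ n : ℤ, ∀ φ : (shiftFunctor C n).obj t ⟶ s, φ = 0) → IsZero s

section Aux

universe w w'
variable {J : Type} [DecidableEq J]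

/-- A cocone over a discrete diagram in `AddCommGrp` whose point is additively
equivalent to a direct sum (compatibly with the inclusions) is a colimit cocone. -/
noncomputable def auxIsColimitOfAddEquiv (D : Discrete J ⥤ AddCommGrpCat.{w}) (c : Cocone D)
    (A : J → Type w') [∀ j, AddCommGroup (A j)]
    (φ : ∀ j, (D.obj ⟨j⟩ : Type w) ≃+ A j)
    (e : (DirectSum J A) ≃+ c.pt)
    (he : ∀ (j : J) (x : D.obj ⟨j⟩), e (DirectSum.of A j (φ j x)) = c.ι.app ⟨j⟩ x) :
    IsColimit c where
  desc s := AddCommGrpCat.ofHom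
    (((DirectSum.toAddMonoid (fun j =>
        ((s.ι.app ⟨j⟩).hom.comp (φ j).symm.toAddMonoidHom))).comp
      e.symm.toAddMonoidHom))
  fac s := by
    rintro ⟨j⟩
    ext x
    have : c.ι.app ⟨j⟩ x = e (DirectSum.of A j (φ j x)) := (he j x).symm
    show (DirectSum.toAddMonoid (fun j =>
        ((s.ι.app ⟨j⟩).hom.comp (φ j).symm.toAddMonoidHom)))
      (e.symm (c.ι.app ⟨j⟩ x)) = s.ι.app ⟨j⟩ x
    rw [this, e.symm_apply_apply, DirectSum.toAddMonoid_of]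
    simp
  uniq s m hm := by
    ext y
    obtain ⟨z, rfl⟩ := e.surjective y
    show m (e z) = (DirectSum.toAddMonoid (fun j =>
        ((s.ι.app ⟨j⟩).hom.comp (φ j).symm.toAddMonoidHom)))
      (e.symm (e z))
    rw [e.symm_apply_apply]
    induction z using DirectSum.induction_on with
    | zero => simp [map_zero]
    | of j a =>
        obtain ⟨x, rfl⟩ := (φ j).surjective a
        rw [DirectSum.toAddMonoid_of, he j x]
        have := congrFun (congrArg (fun (f : _ ⟶ _) => (f : _ → _)) (hm ⟨j⟩)) x
        simpa using this
    | add a b ha hb => simp only [map_add, ha, hb]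

/-- Conversely, the point of a colimit cocone over a discrete diagram in `AddCommGrp`
is additively equivalent to the direct sum, compatibly with the inclusions. -/
noncomputable def auxAddEquivOfIsColimit (D : Discrete J ⥤ AddCommGrpCat.{w}) (c : Cocone D)
    (hc : IsColimit c) :
    { e : (DirectSum J (fun j => D.obj ⟨j⟩)) ≃+ c.pt //
      ∀ (j : J) (x : D.obj ⟨j⟩),
        e (DirectSum.of (fun j => D.obj ⟨j⟩) j x) = c.ι.app ⟨j⟩ x } := by
  let std : Cocone D :=
    ⟨AddCommGrpCat.of (DirectSum J (fun j => D.obj ⟨j⟩)),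
      Discrete.natTrans (fun j => AddCommGrpCat.ofHom (DirectSum.of (fun j => D.obj ⟨j⟩) j.as))⟩
  have hstd : IsColimit std :=
    auxIsColimitOfAddEquiv D std _ (fun j => AddEquiv.refl _) (AddEquiv.refl _)
      (fun j x => rfl)
  refine ⟨CategoryTheory.Iso.addCommGroupIsoToAddEquiv
    (IsColimit.coconePointUniqueUpToIso hstd hc), fun j x => ?_⟩
  exact congrFun (congrArg (fun (f : _ ⟶ _) => (f : _ → _))
    (IsColimit.comp_coconePointUniqueUpToIso_hom hstd hc ⟨j⟩)) x

end Aux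

theorem compactly_generated_of_conservative_coproduct_preserving_right_adjoint
    {T : Type u₁} {S : Type u₂} [Category.{v₁} T] [Category.{v₂} S]
    [Preadditive T] [Preadditive S] [HasZeroObject T] [HasZeroObject S]
    [HasShift T ℤ] [HasShift S ℤ]
    [∀ n : ℤ, (shiftFunctor T n).Additive] [∀ n : ℤ, (shiftFunctor S n).Additive]
    [Pretriangulated T] [Pretriangulated S]
    [HasCoproducts.{0} T] [HasCoproducts.{0} S]
    (F : T ⥤ S) [F.CommShift ℤ] [F.IsTriangulated]
    (G : S ⥤ T) (adj : F ⊣ G) [G.ReflectsIsomorphisms]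
    (hG : ∀ J : Type, PreservesColimitsOfShape (Discrete J) G)
    (T₀ : Set T) (hT₀ : IsCompactlyGeneratedBy T₀) :
    IsCompactlyGeneratedBy (F.obj '' T₀) := by
  haveI : G.IsRightAdjoint := ⟨F, ⟨adj⟩⟩
  haveI hSbc : HasBinaryCoproducts S := (inferInstance : HasCoproducts.{0} S) WalkingPair
  haveI hSbb : HasBinaryBiproducts S := HasBinaryBiproducts.of_hasBinaryCoproducts
  haveI : PreservesColimitsOfShape (Discrete WalkingPair) G := hG WalkingPair
  haveI : PreservesBinaryBiproducts G := preservesBinaryBiproducts_of_preservesBinaryCoproducts G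
  haveI hGadd : G.Additive := Functor.additive_of_preservesBinaryBiproducts G
  -- the adjunction as an additive equivalence on hom groups
  let adjE : ∀ (x : T) (s : S), (F.obj x ⟶ s) ≃+ (x ⟶ G.obj s) := fun x s =>
    { adj.homEquiv x s with
      map_add' := fun a b => by
        show adj.homEquiv x s (a + b) = adj.homEquiv x s a + adj.homEquiv x s b
        simp only [Adjunction.homEquiv_apply, Functor.map_add, Preadditive.comp_add] }
  have adjE_apply : ∀ (x : T) (s : S) (f : F.obj x ⟶ s), adjE x s f = adj.homEquiv x s f :=
    fun _ _ _ => rfl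
  have adjE_symm : ∀ (x : T) (s : S) (g : x ⟶ G.obj s),
      (adjE x s).symm g = (adj.homEquiv x s).symm g := fun _ _ _ => rfl
  constructor
  · rintro _ ⟨t, ht, rfl⟩ J
    classical
    haveI : HasColimitsOfShape (Discrete J) S := (inferInstance : HasCoproducts.{0} S) J
    haveI hcpt : PreservesColimitsOfShape (Discrete J) (preadditiveCoyoneda.obj (Opposite.op t)) :=
      (hT₀.1 t ht J).some
    haveI : PreservesColimitsOfShape (Discrete J) G := hG J
    refine ⟨⟨fun {K} => ?_⟩⟩
    have hcS := colimit.isColimit K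
    apply preservesColimit_of_preserves_colimit_cocone hcS
    set cS := colimit.cocone K
    let H₁ := preadditiveCoyoneda.obj (Opposite.op t)
    let H₂ := preadditiveCoyoneda.obj (Opposite.op (F.obj t))
    have hcT : IsColimit (G.mapCocone cS) := isColimitOfPreserves G hcS
    have h1 : IsColimit (H₁.mapCocone (G.mapCocone cS)) := isColimitOfPreserves H₁ hcT
    obtain ⟨e₂, he₂⟩ := auxAddEquivOfIsColimit ((K ⋙ G) ⋙ H₁) (H₁.mapCocone (G.mapCocone cS)) h1
    refine auxIsColimitOfAddEquiv (K ⋙ H₂) (H₂.mapCocone cS)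
      (fun j => (t ⟶ G.obj (K.obj ⟨j⟩))) (fun j => adjE t (K.obj ⟨j⟩))
      (e₂.trans (adjE t cS.pt).symm) (fun j x => ?_)
    show (adjE t cS.pt).symm (e₂ (DirectSum.of _ j (adjE t (K.obj ⟨j⟩) x))) = x ≫ cS.ι.app ⟨j⟩
    rw [he₂ j (adjE t (K.obj ⟨j⟩) x)]
    show (adjE t cS.pt).symm (adjE t (K.obj ⟨j⟩) x ≫ G.map (cS.ι.app ⟨j⟩)) = x ≫ cS.ι.app ⟨j⟩
    erw [adjE_symm, adjE_apply, Adjunction.homEquiv_naturality_right_symm,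
      Equiv.symm_apply_apply]
  · intro s hs
    have hGs : IsZero (G.obj s) := by
      apply hT₀.2
      intro t ht n ψ
      have hψ' : (adj.homEquiv _ s).symm ψ = 0 := by
        have h0 := hs (F.obj t) ⟨t, ht, rfl⟩ n
          ((F.commShiftIso n).inv.app t ≫ (adj.homEquiv _ s).symm ψ)
        calc (adj.homEquiv _ s).symm ψ
            = (F.commShiftIso n).hom.app t ≫
              ((F.commShiftIso n).inv.app t ≫ (adj.homEquiv _ s).symm ψ) := by simp
          _ = 0 := by rw [h0, comp_zero]
      have : ψ = (adj.homEquiv _ s) 0 := by rw [← hψ', Equiv.apply_symm_apply]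
      rw [this, Adjunction.homEquiv_apply, Functor.map_zero, comp_zero]
    have h0 : IsIso (0 : s ⟶ s) := by
      have heq : G.map (0 : s ⟶ s) = 𝟙 (G.obj s) := hGs.eq_of_src _ _
      have : IsIso (G.map (0 : s ⟶ s)) := by rw [heq]; infer_instance
      exact isIso_of_reflects_iso (0 : s ⟶ s) G
    rw [IsZero.iff_id_eq_zero, ← IsIso.hom_inv_id (0 : s ⟶ s), zero_comp]
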